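/- Let OABC be a trapezoid with OA parallel to BC and a = |OA| > c = |BC|, with legs b = |AB| and d = |CO|, all four side lengths being integers, and whose area equals its perimeter. Then the triangle with side lengths a−c, b, d (obtained by translating side AB along the parallel direction to cut off a triangle from the trapezoid) is a perimeter-dominant Heronian triangle: its area is a positive integer and is strictly less than its perimeter (a−c) + b + d. -/

import Mathlib

noncomputable section

/-- Euclidean distance between two points of `ℝ × ℝ`. -/
def dist2 (p q : ℝ × ℝ) : ℝ := Real.sqrt ((p.1 - q.1) ^ 2 + (p.2 - q.2) ^ 2)

/-- Signed cross product of the vectors `q - p` and `r - p`. -/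
def cross (p q r : ℝ × ℝ) : ℝ :=
  (q.1 - p.1) * (r.2 - p.2) - (q.2 - p.2) * (r.1 - p.1)

/-- Three points are collinear. -/
def Collinear3 (p q r : ℝ × ℝ) : Prop := cross p q r = 0

/-- Dot product on `ℝ × ℝ`. -/
def dot2 (p q : ℝ × ℝ) : ℝ := p.1 * q.1 + p.2 * q.2

/-- Closed segment between two points. -/
def Seg (p q : ℝ × ℝ) : Set (ℝ × ℝ) :=
  {x | ∃ t : ℝ, 0 ≤ t ∧ t ≤ 1 ∧ x = (1 - t) • p + t • q}

/-- Twice the signed (shoelace) area of the quadrilateral `O A B C`. -/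
def shoelace (O A B C : ℝ × ℝ) : ℝ :=
  (O.1 * A.2 - A.1 * O.2) + (A.1 * B.2 - B.1 * A.2) +
    (B.1 * C.2 - C.1 * B.2) + (C.1 * O.2 - O.1 * C.2)

/-- Area of the (simple) quadrilateral `O A B C`, by the shoelace formula. -/
def quadArea (O A B C : ℝ × ℝ) : ℝ := |shoelace O A B C| / 2

/-- Perimeter of the quadrilateral `O A B C`. -/
def quadPerim (O A B C : ℝ × ℝ) : ℝ :=
  dist2 O A + dist2 A B + dist2 B C + dist2 C O

/-- Simple quadrilateral: no three vertices collinear, and the four closed sides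
intersect only at shared endpoints. -/
def IsSimpleQuad (O A B C : ℝ × ℝ) : Prop :=
  ¬ Collinear3 O A B ∧ ¬ Collinear3 A B C ∧ ¬ Collinear3 B C O ∧ ¬ Collinear3 C O A ∧
  Seg O A ∩ Seg B C = ∅ ∧ Seg A B ∩ Seg C O = ∅ ∧
  Seg O A ∩ Seg A B = {A} ∧ Seg A B ∩ Seg B C = {B} ∧
  Seg B C ∩ Seg C O = {C} ∧ Seg C O ∩ Seg O A = {O}

/-- Quadrilateral `O A B C`: simple, with vertices in counterclockwise order. -/
def IsQuad (O A B C : ℝ × ℝ) : Prop :=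
  IsSimpleQuad O A B C ∧ 0 < shoelace O A B C

/-- A point of `ℝ × ℝ` with integer coordinates. -/
def IsLatticePt (p : ℝ × ℝ) : Prop := ∃ m n : ℤ, p = ((m : ℝ), (n : ℝ))

/-- An isometry of the Euclidean plane `ℝ × ℝ`. -/
def IsIsometry2 (f : ℝ × ℝ → ℝ × ℝ) : Prop :=
  Function.Bijective f ∧ ∀ p q, dist2 (f p) (f q) = dist2 p q

/-- The four vertices are in convex position: no vertex lies in the convex hull
of the other three. -/
def ConvexPos (O A B C : ℝ × ℝ) : Prop :=
  O ∉ convexHull ℝ ({A, B, C} : Set (ℝ × ℝ)) ∧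
  A ∉ convexHull ℝ ({O, B, C} : Set (ℝ × ℝ)) ∧
  B ∉ convexHull ℝ ({O, A, C} : Set (ℝ × ℝ)) ∧
  C ∉ convexHull ℝ ({O, A, B} : Set (ℝ × ℝ))

/-- The segment `pq` is parallel to the segment `rs`. -/
def Para (p q r s : ℝ × ℝ) : Prop :=
  (q.1 - p.1) * (s.2 - r.2) - (q.2 - p.2) * (s.1 - r.1) = 0

/-- Area of the triangle `p q r`. -/
def triArea (p q r : ℝ × ℝ) : ℝ := |cross p q r| / 2

/-- Heron's formula: area of a triangle with side lengths `p`, `q`, `r`. -/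
def heronArea (p q r : ℝ) : ℝ :=
  Real.sqrt ((p + q + r) * (-p + q + r) * (p - q + r) * (p + q - r)) / 4

end

private lemma heron_key (p q r e1 e2 f1 f2 : ℝ)
    (h1 : e1 ^ 2 + e2 ^ 2 = p ^ 2)
    (h2 : (f1 - e1) ^ 2 + (f2 - e2) ^ 2 = q ^ 2)
    (h3 : f1 ^ 2 + f2 ^ 2 = r ^ 2) :
    heronArea p q r = |e1 * f2 - e2 * f1| / 2 ∧
      (p + q + r) * (-p + q + r) * (p - q + r) * (p + q - r) =
        4 * (e1 * f2 - e2 * f1) ^ 2 := by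
  have key : (p + q + r) * (-p + q + r) * (p - q + r) * (p + q - r) =
      (2 * (e1 * f2 - e2 * f1)) ^ 2 := by
    linear_combination (-(2*q^2 + 2*r^2 - p^2 - (e1^2+e2^2))) * h1 +
      (-(2*(e1^2+e2^2) + 2*r^2 - q^2 - ((f1-e1)^2+(f2-e2)^2))) * h2 +
      (-(2*(e1^2+e2^2) + 2*((f1-e1)^2+(f2-e2)^2) - r^2 - (f1^2+f2^2))) * h3
  refine ⟨?_, by linear_combination key⟩
  rw [heronArea, key, Real.sqrt_sq_eq_abs, abs_mul]
  rw [abs_of_nonneg (by norm_num : (0:ℝ) ≤ 2)]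
  ring

private lemma rat_int_of_heron (p q r : ℤ) (t : ℚ) (ht : 0 ≤ t)
    (h : 16 * t ^ 2 = (((p + q + r) * (-p + q + r) * (p - q + r) * (p + q - r) : ℤ) : ℚ)) :
    ∃ m : ℤ, t = (m : ℚ) := by
  have hk : (4 * t) * (4 * t) = (((p+q+r)*(-p+q+r)*(p-q+r)*(p+q-r) : ℤ) : ℚ) := by
    linear_combination h
  have hden : (4 * t).den * (4 * t).den = 1 := by
    rw [← Rat.mul_self_den, hk]; exact Rat.den_intCast _
  have hden1 : (4 * t).den = 1 := Nat.dvd_one.mp ⟨(4*t).den, hden.symm⟩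
  set K0 := (4 * t).num with hK0def
  have hK0 : (K0 : ℚ) = 4 * t := by
    rw [hK0def]
    conv_rhs => rw [← Rat.num_div_den (4 * t)]
    rw [hden1]; simp
  have hKZ : K0 ^ 2 = (p+q+r)*(-p+q+r)*(p-q+r)*(p+q-r) := by
    have h2 : ((K0:ℚ)) ^ 2 = (((p+q+r)*(-p+q+r)*(p-q+r)*(p+q-r) : ℤ) : ℚ) := by
      rw [hK0]; linear_combination hk
    exact_mod_cast h2
  rcases Int.even_or_odd (p + q + r) with ⟨s, hs⟩ | ⟨s, hs⟩
  · have hp : p = s + s - q - r := by omega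
    subst hp
    have h16 : (16 : ℤ) ∣ K0 ^ 2 :=
      ⟨s * (q + r - s) * (s - q) * (s - r), by linear_combination hKZ⟩
    have h4 : (4 : ℤ) ∣ K0 := by
      have h2 : (4:ℤ) ^ 2 ∣ K0 ^ 2 := by norm_num; exact h16
      exact (Int.pow_dvd_pow_iff (by norm_num)).mp h2
    obtain ⟨e, he⟩ := h4
    refine ⟨e, ?_⟩
    have h4t : (4 : ℚ) * t = 4 * (e : ℚ) := by
      rw [← hK0, he]; push_cast; ring
    linarith
  · exfalso
    have hm0 : Odd (q ^ 2 + r ^ 2 - p ^ 2) := by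
      rcases Int.even_or_odd p with ⟨i, hi⟩ | ⟨i, hi⟩ <;>
      rcases Int.even_or_odd q with ⟨j, hj⟩ | ⟨j, hj⟩ <;>
      rcases Int.even_or_odd r with ⟨k, hk2⟩ | ⟨k, hk2⟩ <;>
      subst hi <;> subst hj <;> subst hk2
      · exfalso; omega
      · exact ⟨2*j^2 + 2*k^2 + 2*k - 2*i^2, by ring⟩
      · exact ⟨2*j^2 + 2*j + 2*k^2 - 2*i^2, by ring⟩
      · exfalso; omega
      · exact ⟨2*j^2 + 2*k^2 - 2*i^2 - 2*i - 1, by ring⟩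
      · exfalso; omega
      · exfalso; omega
      · exact ⟨2*(j^2+j+k^2+k-i^2-i), by ring⟩
    obtain ⟨β, hβ⟩ := hm0
    have h1 : K0 ^ 2 = 4 * (q * r) ^ 2 - (2 * β + 1) ^ 2 := by
      rw [hKZ]
      linear_combination (-(q^2+r^2-p^2+2*β+1)) * hβ
    have hz : ((K0 : ZMod 4)) ^ 2 = 3 := by
      have h2 := congrArg (fun x : ℤ => (x : ZMod 4)) h1
      push_cast at h2
      rw [h2]
      have h40 : (4 : ZMod 4) = 0 := by decide
      linear_combination (((q:ZMod 4)*(r:ZMod 4))^2 - (β:ZMod 4)^2 - (β:ZMod 4) - 1) * h40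
    have hall : ∀ x : ZMod 4, x ^ 2 ≠ 3 := by decide
    exact hall _ hz

private lemma dist_sq {p q : ℝ × ℝ} {r : ℝ} (h : dist2 p q = r) :
    0 ≤ r ∧ (p.1 - q.1) ^ 2 + (p.2 - q.2) ^ 2 = r ^ 2 := by
  subst h
  refine ⟨Real.sqrt_nonneg _, ?_⟩
  rw [dist2, Real.sq_sqrt (by positivity)]


private lemma sq_sum_zero {x y r : ℝ} (h2 : x ^ 2 + y ^ 2 = r ^ 2) (h : r = 0) :
    x = 0 ∧ y = 0 := by
  have hs : x ^ 2 + y ^ 2 = 0 := by rw [h2, h]; ring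
  constructor <;> nlinarith [sq_nonneg x, sq_nonneg y]


private lemma seg_mem' {p q x : ℝ × ℝ} (t : ℝ) (h0 : 0 ≤ t) (h1 : t ≤ 1)
    (hx1 : x.1 = (1 - t) * p.1 + t * q.1) (hx2 : x.2 = (1 - t) * p.2 + t * q.2) :
    x ∈ Seg p q := by
  refine ⟨t, h0, h1, ?_⟩
  obtain ⟨p1, p2⟩ := p; obtain ⟨q1, q2⟩ := q; obtain ⟨z1, z2⟩ := x
  simp only [Prod.smul_mk, Prod.mk_add_mk, smul_eq_mul, Prod.ext_iff] at *
  exact ⟨hx1, hx2⟩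

set_option maxHeartbeats 2000000 in
/-- cutting an equable integer-sided trapezoid along a translate
of a leg yields a perimeter-dominant Heronian triangle. -/
theorem equable_trapezoid_cut_triangle (O A B C : ℝ × ℝ) (a b c d : ℤ)
    (hquad : IsQuad O A B C)
    (hpara : Para O A B C) (hnpara : ¬ Para A B C O)
    (ha : dist2 O A = (a : ℝ)) (hb : dist2 A B = (b : ℝ))
    (hc : dist2 B C = (c : ℝ)) (hd : dist2 C O = (d : ℝ))
    (hca : c < a)
    (hequable : quadArea O A B C = quadPerim O A B C) :
    ∃ m : ℤ, 0 < m ∧ heronArea ((a : ℝ) - (c : ℝ)) (b : ℝ) (d : ℝ) = (m : ℝ) ∧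
      heronArea ((a : ℝ) - (c : ℝ)) (b : ℝ) (d : ℝ) < ((a : ℝ) - (c : ℝ)) + (b : ℝ) + (d : ℝ) := by

  obtain ⟨⟨h1, h2, h3, h4, h5, h6, -, -, -, -⟩, hpos⟩ := hquad
  obtain ⟨ha0, ha2⟩ := dist_sq ha
  obtain ⟨hb0, hb2⟩ := dist_sq hb
  obtain ⟨hc0, hc2⟩ := dist_sq hc
  obtain ⟨hd0, hd2⟩ := dist_sq hd
  simp only [Collinear3, cross] at h1 h2 h3 h4
  simp only [Para] at hpara
  simp only [shoelace] at hpos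
  simp only [quadArea, quadPerim, shoelace] at hequable
  rw [ha, hb, hc, hd] at hequable
  obtain ⟨x0, y0⟩ := O
  obtain ⟨x1, y1⟩ := A
  obtain ⟨x2, y2⟩ := B
  obtain ⟨x3, y3⟩ := C
  dsimp only at h1 h2 h3 h4 hpara hpos hequable ha2 hb2 hc2 hd2
  -- positivity of side lengths
  have hapos : 0 < (a:ℝ) := by
    rcases lt_or_eq_of_le ha0 with h | h; · exact h
    obtain ⟨e1, e2⟩ := sq_sum_zero ha2 h.symm
    exact absurd (by linear_combination (y0 - y2) * e1 + (x2 - x0) * e2) h1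
  have hbpos : 0 < (b:ℝ) := by
    rcases lt_or_eq_of_le hb0 with h | h; · exact h
    obtain ⟨e1, e2⟩ := sq_sum_zero hb2 h.symm
    exact absurd (by linear_combination (y1 - y3) * e1 + (x3 - x1) * e2) h2
  have hcpos : 0 < (c:ℝ) := by
    rcases lt_or_eq_of_le hc0 with h | h; · exact h
    obtain ⟨e1, e2⟩ := sq_sum_zero hc2 h.symm
    exact absurd (by linear_combination (y2 - y0) * e1 + (x0 - x2) * e2) h3
  have hdpos : 0 < (d:ℝ) := by
    rcases lt_or_eq_of_le hd0 with h | h; · exact h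
    obtain ⟨e1, e2⟩ := sq_sum_zero hd2 h.symm
    exact absurd (by linear_combination (y3 - y1) * e1 + (x1 - x3) * e2) h4
  -- decompose w = C - B as l * u
  have hden : (0:ℝ) < (x1 - x0) ^ 2 + (y1 - y0) ^ 2 := by
    have : (x0 - x1) ^ 2 + (y0 - y1) ^ 2 = (x1-x0)^2 + (y1-y0)^2 := by ring
    rw [this] at ha2
    rw [ha2]; positivity
  obtain ⟨l, hw1, hw2⟩ : ∃ l : ℝ, x3 - x2 = l * (x1 - x0) ∧ y3 - y2 = l * (y1 - y0) := by
    refine ⟨((x1 - x0) * (x3 - x2) + (y1 - y0) * (y3 - y2)) / ((x1 - x0) ^ 2 + (y1 - y0) ^ 2), ?_, ?_⟩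
    · rw [div_mul_eq_mul_div, eq_div_iff (ne_of_gt hden)]
      linear_combination (-(y1 - y0)) * hpara
    · rw [div_mul_eq_mul_div, eq_div_iff (ne_of_gt hden)]
      linear_combination (x1 - x0) * hpara
  -- c^2 = l^2 a^2
  have hcla : (c:ℝ) ^ 2 = l ^ 2 * (a:ℝ) ^ 2 := by
    have ha2' : (x1-x0)^2 + (y1-y0)^2 = (a:ℝ)^2 := by linear_combination ha2
    linear_combination (-1) * hc2 + (-(x2 - x3) + l*(x1-x0)) * hw1 + (-(y2-y3) + l*(y1-y0)) * hw2 + l^2 * ha2'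
  -- l < 0, else segments AB and CO intersect (or c = 0)
  have hlneg : l < 0 := by
    rcases lt_trichotomy l 0 with h | h | h
    · exact h
    · exfalso
      have : (c:ℝ)^2 = 0 := by rw [hcla, h]; ring
      nlinarith
    · exfalso
      have h1l : (0:ℝ) < 1 + l := by linarith
      have hP : ((x1 + (x2-x1)/(1+l), y1 + (y2-y1)/(1+l)) : ℝ × ℝ) ∈
          Seg (x1,y1) (x2,y2) ∩ Seg (x3,y3) (x0,y0) := by
        constructor
        · refine seg_mem' (1/(1+l)) (by positivity) (by rw [div_le_one h1l]; linarith) ?_ ?_ <;>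
          · dsimp only
            field_simp
            ring
        · have hl1 : l / (1+l) ≤ 1 := by rw [div_le_one h1l]; linarith
          refine seg_mem' (l/(1+l)) (by positivity) hl1 ?_ ?_
          · dsimp only
            field_simp
            linear_combination (-1) * hw1
          · dsimp only
            field_simp
            linear_combination (-1) * hw2
      rw [h6] at hP
      exact hP
  clear h5 h6 h1 h2 h3 h4 hnpara ha hb hc hd hpara hden
  -- c = -l * a
  have hcea : (c:ℝ) = (-l) * (a:ℝ) := by
    have hprod : ((c:ℝ) - (-l) * a) * ((c:ℝ) + (-l) * a) = 0 := by
      linear_combination hcla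
    have hsum : (0:ℝ) < (c:ℝ) + (-l) * a := by
      have : 0 < (-l) * (a:ℝ) := by
        apply mul_pos (by linarith) hapos
      linarith
    rcases mul_eq_zero.mp hprod with h | h
    · linarith
    · exfalso; linarith
  have hl1 : -1 < l := by
    have hcaR : (c:ℝ) < (a:ℝ) := by exact_mod_cast hca
    have h2 : (-l) * (a:ℝ) < 1 * a := by rw [← hcea]; linarith
    have h3 := (mul_lt_mul_iff_left₀ hapos).mp h2
    linarith
  -- shoelace = (1 - l) * K
  set K : ℝ := (x1 - x0) * (y2 - y1) - (y1 - y0) * (x2 - x1) with hK_def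
  have hshoe : x0 * y1 - x1 * y0 + (x1 * y2 - x2 * y1) + (x2 * y3 - x3 * y2) + (x3 * y0 - x0 * y3)
      = (1 - l) * K := by
    rw [hK_def]
    linear_combination (y0 - y2) * hw1 + (x2 - x0) * hw2
  rw [hshoe] at hpos hequable
  have hKpos : 0 < K := by
    by_contra hcon
    push_neg at hcon
    have h2 : (1 - l) * K ≤ 0 := mul_nonpos_iff.mpr (Or.inl ⟨by linarith, hcon⟩)
    linarith
  rw [abs_of_pos hpos] at hequable
  -- heron data
  have ha2' : ((a:ℝ) - c) ^ 2 = ((1+l)*(x1-x0)) ^ 2 + ((1+l)*(y1-y0)) ^ 2 := by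
    have : ((a:ℝ) - c) ^ 2 = (1+l)^2 * ((x0-x1)^2 + (y0-y1)^2) := by
      rw [ha2]
      linear_combination ((c:ℝ) - 2*a - l*a) * hcea
    rw [this]; ring
  have hb2' : ((b:ℝ)) ^ 2 = ((x3-x0) - (1+l)*(x1-x0)) ^ 2 + ((y3-y0) - (1+l)*(y1-y0)) ^ 2 := by
    rw [← hb2]
    have e1 : (x3-x0) - (1+l)*(x1-x0) = x2 - x1 := by linear_combination hw1
    have e2 : (y3-y0) - (1+l)*(y1-y0) = y2 - y1 := by linear_combination hw2
    rw [e1, e2]; ring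
  have hd2' : ((d:ℝ)) ^ 2 = (x3-x0) ^ 2 + (y3-y0) ^ 2 := hd2.symm
  -- apply Heron
  obtain ⟨hHA, hProd⟩ := heron_key ((a:ℝ)-c) b d ((1+l)*(x1-x0)) ((1+l)*(y1-y0))
    (x3-x0) (y3-y0) ha2'.symm hb2'.symm hd2'.symm
  have hW : (1+l)*(x1-x0)*(y3-y0) - (1+l)*(y1-y0)*(x3-x0) = (1+l)*K := by
    rw [hK_def]
    linear_combination ((1+l)*(x1-x0))*hw2 + (-(1+l)*(y1-y0))*hw1
  rw [hW] at hHA hProd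
  have h1lpos : (0:ℝ) < 1 + l := by linarith
  have hT : heronArea ((a:ℝ)-c) b d = (1+l)*K/2 := by
    rw [hHA, abs_of_pos (mul_pos h1lpos hKpos)]
  -- rational value
  have haZ : 0 < a := by exact_mod_cast hapos
  have hbZ : 0 < b := by exact_mod_cast hbpos
  have hcZ : 0 < c := by exact_mod_cast hcpos
  have hdZ : 0 < d := by exact_mod_cast hdpos
  have hne : ((a:ℝ)+c) ≠ 0 := by positivity
  have hreal : ((1+l)*K/2) * ((a:ℝ)+c) = ((a:ℝ)-c)*((a:ℝ)+b+c+d) := by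
    linear_combination ((a:ℝ)-c)*hequable + K*hcea
  obtain ⟨t, htT⟩ : ∃ t : ℚ, (t:ℝ) = (1+l)*K/2 := by
    refine ⟨((a:ℚ) - c) * ((a:ℚ)+b+c+d) / ((a:ℚ)+c), ?_⟩
    push_cast
    rw [div_eq_iff hne]
    linear_combination -hreal
  have htpos : 0 < t := by
    have : (0:ℝ) < (t:ℝ) := by rw [htT]; positivity
    exact_mod_cast this
  have hQ : 16 * t^2 = ((((a-c)+b+d)*(-(a-c)+b+d)*((a-c)-b+d)*((a-c)+b-d) : ℤ) : ℚ) := by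
    have hR : ((16 * t^2 : ℚ) : ℝ) = (((((a-c)+b+d)*(-(a-c)+b+d)*((a-c)-b+d)*((a-c)+b-d) : ℤ) : ℚ) : ℝ) := by
      push_cast
      rw [htT]
      linear_combination -hProd
    exact_mod_cast hR
  obtain ⟨mInt, hmInt⟩ := rat_int_of_heron (a-c) b d t htpos.le hQ
  refine ⟨mInt, ?_, ?_, ?_⟩
  · have : (0:ℚ) < mInt := hmInt ▸ htpos
    exact_mod_cast this
  · rw [hT, ← htT, hmInt]
    norm_cast
  · rw [hT]
    have e : (1-l)*(K - 2*(a:ℝ)) = 2*((b:ℝ)+d) := by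
      linear_combination 2*hequable + 2*hcea
    have hK2a : 0 < K - 2*(a:ℝ) := by
      by_contra hcon
      push_neg at hcon
      have h2 : (1-l)*(K-2*(a:ℝ)) ≤ 0 := mul_nonpos_iff.mpr (Or.inl ⟨by linarith, hcon⟩)
      rw [e] at h2
      linarith
    have hgoal : ((a:ℝ)-c+b+d) - (1+l)*K/2 = (-l)*(K-2*(a:ℝ)) := by
      linear_combination -hequable - 2*hcea
    have := mul_pos (by linarith : (0:ℝ) < -l) hK2a
    linarith
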